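/- There exists a matching market with n students under hereditary M♮-convex set constraints in which no matching is both nonwasteful and EF-k for any k < n−1. Specifically, with n students and n colleges, cyclic preferences (student s_i ranks colleges c_{i+1}, c_{i+2}, ..., c_n, c_1, ..., c_i in that order; college c_i ranks students s_i, s_{i+1}, ..., s_n, s_1, ..., s_{i−1}), and feasibility f(ν) = 0 iff ν_i ≤ 1 for all i and Σ_i ν_i ≤ n−1, every nonwasteful matching leaves exactly one student unmatched and that student has justified envy toward all n−1 other students. -/

import Mathlib

/- The cyclic market of Example 6, with `n + 1` students `s_0, …, s_n` and
`n + 1` colleges `c_0, …, c_n` (indices modulo `n + 1`).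
Student `s_i` ranks colleges by `rankS`: her `r`-th choice is `c_{i+1+r}`
(so `c_{i+1}` is best and `c_i` is worst); college `c_i` ranks students by
`rankC`: its best student is `s_i` and its worst is `s_{i-1}`.
Smaller rank means more preferred. -/

def rankS {n : ℕ} (i c : Fin (n + 1)) : ℕ := (c - i - 1).val

def rankC {n : ℕ} (i s : Fin (n + 1)) : ℕ := (s - i).val

/-- Feasibility: each college accepts at most one student and at most
`n = (n+1) - 1` students are matched in total. -/
def FeasCyc {n : ℕ} (μ : Fin (n + 1) → Option (Fin (n + 1))) : Prop :=
  (∀ s s' c, μ s = some c → μ s' = some c → s = s') ∧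
    (Finset.univ.filter (fun s => μ s ≠ none)).card ≤ n

/-- `c ≻ₛ μ(s)`: student `s` prefers college `c` to her current assignment
(all colleges are acceptable to all students). -/
def POverCyc {n : ℕ} (μ : Fin (n + 1) → Option (Fin (n + 1))) (s c : Fin (n + 1)) : Prop :=
  μ s = none ∨ ∃ c', μ s = some c' ∧ rankS s c < rankS s c'

/-- Nonwastefulness: no student claims an empty seat. -/
def NWCyc {n : ℕ} (μ : Fin (n + 1) → Option (Fin (n + 1))) : Prop :=
  ∀ s c, ¬ (POverCyc μ s c ∧ FeasCyc (Function.update μ s (some c)))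

/-- `s` has justified envy toward `t`. -/
def EnvyCyc {n : ℕ} (μ : Fin (n + 1) → Option (Fin (n + 1))) (s t : Fin (n + 1)) : Prop :=
  ∃ c, μ t = some c ∧ POverCyc μ s c ∧ rankC c s < rankC c t

lemma vsub {m : ℕ} (a b : Fin (m+1)) : (a - b).val = (a.val + (m+1) - b.val) % (m+1) := by
  rw [Fin.sub_def]
  simp only [Fin.val_mk]
  congr 1
  have := b.isLt
  omega

lemma vsub' {m : ℕ} (a b : Fin (m+1)) :
    (a - b).val = if b.val ≤ a.val then a.val - b.val else a.val + (m+1) - b.val := by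
  rw [vsub]
  have ha := a.isLt; have hb := b.isLt
  split_ifs with h
  · have : a.val + (m+1) - b.val = (a.val - b.val) + (m+1) := by omega
    rw [this, Nat.add_mod_right, Nat.mod_eq_of_lt (by omega)]
  · rw [Nat.mod_eq_of_lt (by omega)]

lemma valone {n : ℕ} (hn : 1 ≤ n) : (1 : Fin (n+1)).val = 1 := by
  rw [Fin.val_one']
  exact Nat.mod_eq_of_lt (by omega)

lemma valzero {m : ℕ} (a : Fin (m+1)) : a.val = 0 ↔ a = 0 := by
  constructor
  · intro h; exact Fin.ext h
  · intro h; rw [h]; rfl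

open Fin.CommRing in
lemma arith (n : ℕ) (hn : 1 ≤ n) (s₀ t c : Fin (n+1)) (hts : t ≠ s₀) (hc : c ≠ s₀ + 1)
    (h : (c - t - 1).val ≤ (s₀ - t).val) : (s₀ - c).val < (t - c).val := by
  obtain ⟨u, hu⟩ : ∃ u, u = c - t := ⟨_, rfl⟩
  obtain ⟨v, hv⟩ : ∃ v, v = s₀ - t := ⟨_, rfl⟩
  rw [← hu, ← hv] at h
  have hb1 : 1 ≤ v.val := by
    have h0 : v ≠ 0 := by rw [hv]; exact sub_ne_zero.mpr (Ne.symm hts)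
    have := (valzero v).not.mpr h0
    omega
  have hbn : v.val ≤ n := by have := v.isLt; omega
  have han : u.val ≤ n := by have := u.isLt; omega
  by_cases ha0 : u.val = 0
  · -- then c = t and the hypothesis forces c = s₀ + 1, contradiction
    have hu0 : u = 0 := (valzero u).mp ha0
    have hct : c = t := by
      have : c - t = 0 := by rw [← hu]; exact hu0
      exact sub_eq_zero.mp this
    have hun : (u - 1).val = n := by
      rw [vsub', valone hn, ha0]; simp
    have hbn' : v.val = n := by omega
    exfalso
    apply hc
    have hvlast : s₀ - t = Fin.last n := by
      rw [← hv]; exact Fin.ext (by simpa using hbn')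
    rw [sub_eq_iff_eq_add] at hvlast
    rw [hct, hvlast]
    calc t = 0 + t := by ring
    _ = (Fin.last n + 1) + t := by rw [Fin.last_add_one]
    _ = Fin.last n + t + 1 := by ring
  · have ha1 : 1 ≤ u.val := by omega
    have h' : u.val - 1 ≤ v.val := by
      have hq : (u - 1).val = u.val - 1 := by rw [vsub', valone hn]; simp [ha1]
      omega
    have hne : u ≠ v + 1 := by
      intro he
      apply hc
      rw [hu, hv] at he
      linear_combination he
    have hab : u.val ≤ v.val := by
      rcases eq_or_lt_of_le hbn with hb | hb
      · omega
      · have hv1 : (v + 1).val = v.val + 1 := by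
          rw [Fin.add_def, valone hn]
          exact Nat.mod_eq_of_lt (by omega)
        have : u.val ≠ v.val + 1 := by
          intro he; exact hne (Fin.ext (by omega))
        omega
    have e1 : s₀ - c = v - u := by rw [hu, hv]; ring
    have e2 : t - c = 0 - u := by rw [hu]; ring
    rw [e1, e2, vsub', vsub']
    split_ifs <;> simp only [Fin.val_zero] at * <;> omega

/-- In the cyclic market with `n + 1 ≥ 2` students, every feasible nonwasteful
matching leaves exactly one student unmatched, and that student has justified
envy toward all other `n` students; consequently no matching is both
nonwasteful and EF-`k` for any `k < n` (the number of students minus one). -/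
theorem stmt11 (n : ℕ) (hn : 1 ≤ n) (μ : Fin (n + 1) → Option (Fin (n + 1)))
    (hfeas : FeasCyc μ) (hnw : NWCyc μ) :
    (∃ s, μ s = none ∧ (∀ t, t ≠ s → μ t ≠ none) ∧ ∀ t, t ≠ s → EnvyCyc μ s t) ∧
      ∀ k, k < n → ∃ s, k < Set.ncard {t | EnvyCyc μ s t} := by
  obtain ⟨hinj, hcard⟩ := hfeas
  -- an unmatched student exists
  obtain ⟨s₀, hs₀⟩ : ∃ s₀, μ s₀ = none := by
    by_contra h
    push_neg at h
    have : Finset.univ.filter (fun s => μ s ≠ none) = Finset.univ :=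
      Finset.filter_true_of_mem (fun s _ => h s)
    rw [this, Finset.card_univ, Fintype.card_fin] at hcard
    omega
  -- an unused college exists
  obtain ⟨cs, hcs⟩ : ∃ c, ∀ s, μ s ≠ some c := by
    by_contra h
    push_neg at h
    have hmem : ∀ c : Fin (n+1), c ∈ (Finset.univ.filter (fun s => μ s ≠ none)).image
        (fun s => (μ s).getD 0) := by
      intro c
      obtain ⟨s, hs⟩ := h c
      exact Finset.mem_image.mpr ⟨s, Finset.mem_filter.mpr ⟨Finset.mem_univ s, by simp [hs]⟩,
        by simp [hs]⟩
    have h1 : (Finset.univ : Finset (Fin (n+1))).card ≤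
        ((Finset.univ.filter (fun s => μ s ≠ none)).image (fun s => (μ s).getD 0)).card :=
      Finset.card_le_card (fun c _ => hmem c)
    have h2 := Finset.card_image_le (s := Finset.univ.filter (fun s => μ s ≠ none))
      (f := fun s => (μ s).getD (0 : Fin (n+1)))
    rw [Finset.card_univ, Fintype.card_fin] at h1
    omega
  -- injectivity is preserved by moving any student to the unused college
  have hinj' : ∀ s', ∀ a b c', Function.update μ s' (some cs) a = some c' →
      Function.update μ s' (some cs) b = some c' → a = b := by
    intro s' a b c' ha hb
    by_cases hA : a = s' <;> by_cases hB : b = s'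
    · rw [hA, hB]
    · exfalso
      subst hA
      rw [Function.update_self] at ha
      rw [Function.update_of_ne hB] at hb
      exact hcs b (by rw [hb, ← Option.some_inj.mp ha])
    · exfalso
      subst hB
      rw [Function.update_self] at hb
      rw [Function.update_of_ne hA] at ha
      exact hcs a (by rw [ha, ← Option.some_inj.mp hb])
    · rw [Function.update_of_ne hA] at ha
      rw [Function.update_of_ne hB] at hb
      exact hinj a b c' ha hb
  -- every other student is matched
  have huniq : ∀ t, t ≠ s₀ → μ t ≠ none := by
    intro t ht hμt
    have hsub : Finset.univ.filter (fun s => μ s ≠ none) ⊆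
        (Finset.univ.erase s₀).erase t := by
      intro x hx
      rw [Finset.mem_filter] at hx
      refine Finset.mem_erase.mpr ⟨?_, Finset.mem_erase.mpr ⟨?_, Finset.mem_univ x⟩⟩
      · intro hxe; exact hx.2 (hxe ▸ hμt)
      · intro hxe; exact hx.2 (hxe ▸ hs₀)
    have hc1 : ((Finset.univ.erase s₀).erase t).card = n - 1 := by
      rw [Finset.card_erase_of_mem (Finset.mem_erase.mpr ⟨ht, Finset.mem_univ t⟩),
        Finset.card_erase_of_mem (Finset.mem_univ s₀), Finset.card_univ, Fintype.card_fin]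
      omega
    have hm : (Finset.univ.filter (fun s => μ s ≠ none)).card ≤ n - 1 :=
      hc1 ▸ Finset.card_le_card hsub
    apply hnw s₀ cs
    refine ⟨Or.inl hs₀, fun a b c' ha hb => hinj' s₀ a b c' ha hb, ?_⟩
    have hsub2 : Finset.univ.filter (fun x => Function.update μ s₀ (some cs) x ≠ none) ⊆
        insert s₀ (Finset.univ.filter (fun x => μ x ≠ none)) := by
      intro x hx
      by_cases hxs : x = s₀
      · exact hxs ▸ Finset.mem_insert_self _ _
      · rw [Finset.mem_filter, Function.update_of_ne hxs] at hx
        exact Finset.mem_insert_of_mem (Finset.mem_filter.mpr hx)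
    calc (Finset.univ.filter (fun x => Function.update μ s₀ (some cs) x ≠ none)).card
        ≤ (insert s₀ (Finset.univ.filter (fun x => μ x ≠ none))).card :=
          Finset.card_le_card hsub2
      _ ≤ (Finset.univ.filter (fun x => μ x ≠ none)).card + 1 := Finset.card_insert_le _ _
      _ ≤ n := by omega
  -- nonwastefulness: no matched student prefers the unused college
  have hkey : ∀ s c, μ s = some c → rankS s c ≤ rankS s cs := by
    intro s c hsc
    by_contra hlt
    push_neg at hlt
    apply hnw s cs
    refine ⟨Or.inr ⟨c, hsc, hlt⟩, fun a b c' ha hb => hinj' s a b c' ha hb, ?_⟩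
    have heq : Finset.univ.filter (fun x => Function.update μ s (some cs) x ≠ none) =
        Finset.univ.filter (fun x => μ x ≠ none) := by
      apply Finset.filter_congr
      intro x _
      by_cases hx : x = s
      · subst hx; simp [Function.update_self, hsc]
      · simp [Function.update_of_ne hx]
    rw [heq]
    exact hcard
  -- the unused college is `s₀ + 1`
  have hstar : cs = s₀ + 1 := by
    by_contra hne'
    have hs : cs - 1 ≠ s₀ := by
      intro h
      apply hne'
      rw [← h]; open Fin.CommRing in ring
    obtain ⟨c, hcm⟩ : ∃ c, μ (cs - 1) = some c := by
      have := huniq (cs - 1) hs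
      cases hμ : μ (cs - 1) with
      | none => exact absurd hμ this
      | some c => exact ⟨c, rfl⟩
    have hk := hkey (cs - 1) c hcm
    unfold rankS at hk
    have hz : cs - (cs - 1) - 1 = 0 := by open Fin.CommRing in ring
    rw [hz] at hk
    simp only [Fin.val_zero, Nat.le_zero] at hk
    have hceq : c = cs := by
      have h0 := (valzero _).mp hk
      open Fin.CommRing in linear_combination h0
    exact hcs (cs - 1) (hceq ▸ hcm)
  -- envy of the unmatched student toward every other student
  have henvy : ∀ t, t ≠ s₀ → EnvyCyc μ s₀ t := by
    intro t ht
    obtain ⟨c, hc⟩ : ∃ c, μ t = some c := by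
      have := huniq t ht
      cases hμ : μ t with
      | none => exact absurd hμ this
      | some c => exact ⟨c, rfl⟩
    refine ⟨c, hc, Or.inl hs₀, ?_⟩
    have hk := hkey t c hc
    have hcnecs : c ≠ cs := by
      intro h; exact hcs t (h ▸ hc)
    unfold rankS at hk
    unfold rankC
    have hrw : cs - t - 1 = s₀ - t := by rw [hstar]; open Fin.CommRing in ring
    rw [hrw] at hk
    exact arith n hn s₀ t c ht (hstar ▸ hcnecs) hk
  refine ⟨⟨s₀, hs₀, huniq, henvy⟩, ?_⟩
  intro k hk
  refine ⟨s₀, ?_⟩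
  have hsub : {t | t ≠ s₀} ⊆ {t | EnvyCyc μ s₀ t} := fun t ht => henvy t ht
  have hset : {t : Fin (n+1) | t ≠ s₀} = Set.univ \ {s₀} := by
    ext x; simp
  have hcard1 : Set.ncard {t : Fin (n+1) | t ≠ s₀} = n := by
    rw [hset, Set.ncard_diff_singleton_of_mem (Set.mem_univ s₀), Set.ncard_univ]
    simp
  have hle : Set.ncard {t : Fin (n+1) | t ≠ s₀} ≤ Set.ncard {t | EnvyCyc μ s₀ t} :=
    Set.ncard_le_ncard hsub (Set.toFinite _)
  omega
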